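/- Let n ≥ 1, h = ⌊log₂ n⌋, κ = n − (2^h − 1), fix a level i with 0 ≤ i < h, and set k_i = ⌊κ/2^{h−i}⌋. For 1 ≤ j ≤ 2^i let t_j = 2^i + j − 1 denote the j-th leftmost node of level i. Then the subtree size of t_j in the implicit binary tree on {1,…,n} equals: 2^{h+1−i} − 1 if j ≤ k_i (a full subtree); 2^{h−i} − 1 + (κ − k_i·2^{h−i}) if j = k_i + 1 ≤ 2^i; and 2^{h−i} − 1 if k_i + 2 ≤ j ≤ 2^i. In particular, if k_i = 2^i (equivalently κ = 2^h) then every level-i subtree is full of size 2^{h+1−i} − 1, and otherwise level i consists, from left to right, of k_i roots of subtrees of size 2^{h+1−i} − 1, one root of a subtree of size 2^{h−i} − 1 + κ − k_i·2^{h−i}, and 2^i − k_i − 1 roots of subtrees of size 2^{h−i} − 1. -/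

import Mathlib

lemma sum_pow_two' (m : ℕ) : ∑ d ∈ Finset.range m, 2^d = 2^m - 1 := by
  induction m with
  | zero => simp
  | succ k ih =>
    rw [Finset.sum_range_succ, ih]
    have : 1 ≤ 2^k := Nat.one_le_two_pow
    have : 2^(k+1) = 2^k + 2^k := by rw [pow_succ, Nat.mul_two]
    omega

lemma core' (n h i m t : ℕ) (hn : 1 ≤ n) (hh : h = Nat.log 2 n) (hi : i < h)
    (him' : i + m = h)
    (ht1 : 2^i ≤ t) (ht2 : t < 2^(i+1)) :
    ({s : ℕ | 1 ≤ s ∧ s ≤ n ∧ ∃ d : ℕ, s / 2^d = t}).ncard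
      = 2^m - 1 + min (2^m) (n + 1 - t * 2^m) := by
  have hn2 : n < 2^(h+1) := by rw [hh]; exact Nat.lt_pow_succ_log_self one_lt_two n
  have hnh : 2^h ≤ n := by rw [hh]; exact Nat.pow_log_le_self 2 (by omega)
  have ht0 : 1 ≤ t := le_trans Nat.one_le_two_pow ht1
  have him : i + m = h := him'
  set g : ℕ → Finset ℕ := fun d => Finset.Ico (t*2^d) (min (n+1) ((t+1)*2^d)) with hg
  have hSeq : {s : ℕ | 1 ≤ s ∧ s ≤ n ∧ ∃ d : ℕ, s / 2^d = t}
      = ↑((Finset.range (m+1)).biUnion g) := by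
    ext s
    simp only [Set.mem_setOf_eq, Finset.coe_biUnion, Finset.mem_coe, Finset.mem_biUnion,
      Finset.mem_range, Finset.mem_Ico, Set.mem_iUnion, hg]
    constructor
    · rintro ⟨hs1, hs2, d, hd⟩
      have hpd : 0 < 2^d := Nat.pow_pos (by norm_num)
      have hlo : t * 2^d ≤ s := (Nat.le_div_iff_mul_le hpd).mp (le_of_eq hd.symm)
      have hhi : s < (t+1) * 2^d := (Nat.div_lt_iff_lt_mul hpd).mp (by omega)
      have hdm : d < m + 1 := by
        by_contra hc
        have h1 : 2^(i+d) = 2^i * 2^d := pow_add 2 i d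
        have h2 : 2^(h+1) ≤ 2^(i+d) := Nat.pow_le_pow_right (by norm_num) (by omega)
        have h3 : 2^i * 2^d ≤ t * 2^d := Nat.mul_le_mul_right _ ht1
        omega
      exact ⟨d, hdm, hlo, lt_min (by omega) hhi⟩
    · rintro ⟨d, hd, hlo, hhi⟩
      have hpd : 0 < 2^d := Nat.pow_pos (by norm_num)
      have hhi1 : s < n + 1 := lt_of_lt_of_le hhi (min_le_left _ _)
      have hhi2 : s < (t+1)*2^d := lt_of_lt_of_le hhi (min_le_right _ _)
      refine ⟨by nlinarith, by omega, d, ?_⟩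
      exact Nat.div_eq_of_lt_le hlo hhi2
  have hdisj : ∀ x ∈ Finset.range (m+1), ∀ y ∈ Finset.range (m+1), x ≠ y →
      Disjoint (g x) (g y) := by
    have H : ∀ x y : ℕ, x < y → Disjoint (g x) (g y) := by
      intro x y hxy
      apply Finset.disjoint_left.mpr
      intro a hax hay
      rw [hg, Finset.mem_Ico] at hax hay
      have h1 : a < (t+1)*2^x := lt_of_lt_of_le hax.2 (min_le_right _ _)
      have h2 : (t+1)*2^x ≤ t*2^y := by
        calc (t+1)*2^x ≤ (2*t)*2^x := Nat.mul_le_mul_right _ (by omega)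
        _ = t * 2^(x+1) := by ring
        _ ≤ t * 2^y := Nat.mul_le_mul_left _ (Nat.pow_le_pow_right (by norm_num) (by omega))
      have := hay.1
      omega
    intro x hx y hy hxy
    rcases lt_or_gt_of_ne hxy with hl | hl
    · exact H x y hl
    · exact (H y x hl).symm
  rw [hSeq, Set.ncard_coe_finset, Finset.card_biUnion hdisj, Finset.sum_range_succ]
  have hfull : ∀ d ∈ Finset.range m, (g d).card = 2^d := by
    intro d hd
    rw [Finset.mem_range] at hd
    have hle : (t+1)*2^d ≤ n+1 := by
      have h1 : (t+1)*2^d ≤ 2^(i+1) * 2^d := Nat.mul_le_mul_right _ (by omega)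
      have h2 : 2^(i+1)*2^d = 2^(i+1+d) := (pow_add 2 (i+1) d).symm
      have h3 : 2^(i+1+d) ≤ 2^h := Nat.pow_le_pow_right (by norm_num) (by omega)
      omega
    rw [hg]
    simp only [Nat.card_Ico, min_eq_right hle]
    rw [Nat.succ_mul, Nat.add_sub_cancel_left]
  rw [Finset.sum_congr rfl hfull, sum_pow_two']
  have hlast : (g m).card = min (2^m) (n+1 - t*2^m) := by
    simp only [hg]
    rw [Nat.card_Ico, Nat.succ_mul]
    generalize (2:ℕ)^m = P
    rw [Nat.min_def, Nat.min_def]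
    split_ifs <;> omega
  rw [hlast]

theorem stmt3 (n : ℕ) (hn : 1 ≤ n) (h κ i kᵢ : ℕ)
    (hh : h = Nat.log 2 n) (hκ : κ = n - (2 ^ h - 1)) (hi : i < h)
    (hki : kᵢ = κ / 2 ^ (h - i)) :
    ∀ j, 1 ≤ j → j ≤ 2 ^ i →
      (j ≤ kᵢ →
        ({s : ℕ | 1 ≤ s ∧ s ≤ n ∧ ∃ d : ℕ, s / 2 ^ d = 2 ^ i + j - 1}).ncard
          = 2 ^ (h + 1 - i) - 1) ∧
      (j = kᵢ + 1 →
        ({s : ℕ | 1 ≤ s ∧ s ≤ n ∧ ∃ d : ℕ, s / 2 ^ d = 2 ^ i + j - 1}).ncard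
          = 2 ^ (h - i) - 1 + (κ - kᵢ * 2 ^ (h - i))) ∧
      (kᵢ + 2 ≤ j →
        ({s : ℕ | 1 ≤ s ∧ s ≤ n ∧ ∃ d : ℕ, s / 2 ^ d = 2 ^ i + j - 1}).ncard
          = 2 ^ (h - i) - 1) := by
  intro j hj1 hj2
  obtain ⟨j', rfl⟩ : ∃ j', j = j' + 1 := ⟨j - 1, by omega⟩
  have hnh : 2^h ≤ n := by rw [hh]; exact Nat.pow_log_le_self 2 (by omega)
  have hn2 : n < 2^(h+1) := by rw [hh]; exact Nat.lt_pow_succ_log_self one_lt_two n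
  have h2i : (2:ℕ)^(i+1) = 2^i + 2^i := by rw [pow_succ, Nat.mul_two]
  have hhi1 : (2:ℕ)^(h+1-i) = 2^(h-i) + 2^(h-i) := by
    rw [show h+1-i = (h-i)+1 from by omega, pow_succ, Nat.mul_two]
  have hpow : (2:ℕ)^i * 2^(h-i) = 2^h := by rw [← pow_add]; congr 1; omega
  have hT : ((2:ℕ)^i + j') * 2^(h-i) = 2^h + j' * 2^(h-i) := by rw [add_mul, hpow]
  have hQ1 : 1 ≤ (2:ℕ)^h := Nat.one_le_two_pow
  have hc := core' n h i (h-i) (2^i + j') hn hh hi (by omega) (Nat.le_add_right _ _)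
    (by omega)
  have hset : (2:ℕ)^i + (j'+1) - 1 = 2^i + j' := by omega
  have hdm : kᵢ * 2^(h-i) + κ % 2^(h-i) = κ := by
    rw [hki, mul_comm]; exact Nat.div_add_mod κ (2^(h-i))
  have hmod : κ % 2^(h-i) < 2^(h-i) := Nat.mod_lt _ (Nat.pow_pos (by norm_num))
  have hκn : n + 1 = 2^h + κ := by omega
  simp only [hset, hc, hT]
  obtain ⟨r, hr⟩ : ∃ r, κ % 2^(h-i) = r := ⟨_, rfl⟩
  rw [hr] at hdm hmod
  obtain ⟨P, hP⟩ : ∃ P, (2:ℕ)^(h-i) = P := ⟨_, rfl⟩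
  obtain ⟨Q, hQ⟩ : ∃ Q, (2:ℕ)^h = Q := ⟨_, rfl⟩
  obtain ⟨R, hR⟩ : ∃ R, (2:ℕ)^(h+1-i) = R := ⟨_, rfl⟩
  have hP1 : 1 ≤ P := hP ▸ Nat.one_le_two_pow
  have hRP : R = P + P := by rw [← hP, ← hR]; exact hhi1
  rw [hQ] at hκn
  rw [hP] at hdm hmod
  simp only [hP, hQ, hR]
  refine ⟨fun hjk => ?_, fun hjk => ?_, fun hjk => ?_⟩
  · have h5 : j' * P + P ≤ kᵢ * P := by
      have := Nat.mul_le_mul_right P hjk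
      rwa [Nat.succ_mul] at this
    rw [min_eq_left (by omega)]
    omega
  · have hj'' : j' = kᵢ := by omega
    subst hj''
    rw [min_eq_right (by omega)]
    omega
  · have h5 : kᵢ * P + P ≤ j' * P := by
      have := Nat.mul_le_mul_right P (show kᵢ + 1 ≤ j' by omega)
      rwa [Nat.succ_mul] at this
    rw [min_eq_right (by omega)]
    omega
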